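/- Let a > 0 and γ > 0, and define f(ω) = ( (a + 1)·e^{2γω} − 1 ) / (2ω²) for ω > 0 (the asymptotic variance for Cauchy sensing noise with scale γ, where φ_η(ω) = e^{−γω}). Then there exists a unique ω* > 0 satisfying the stationarity equation (a + 1)·(γω − 1)·e^{2γω} + 1 = 0, and ω* is the unique global minimizer of f on (0, ∞); in particular f is strictly decreasing on (0, ω*]. Consequently, for θ_R > 0, the minimizer of f over ω ∈ (0, 2π/θ_R] is min(2π/θ_R, ω*). -/

import Mathlib

open Filter Topology Set


noncomputable def gC (a γ : ℝ) : ℝ → ℝ :=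
  fun ω => (a + 1) * (γ * ω - 1) * Real.exp (2 * γ * ω) + 1

lemma gC_hasDerivAt (a γ ω : ℝ) :
    HasDerivAt (gC a γ) ((a + 1) * γ * Real.exp (2 * γ * ω) * (2 * γ * ω - 1)) ω := by
  have h1 : HasDerivAt (fun ω : ℝ => γ * ω - 1) γ ω := by
    simpa using ((hasDerivAt_id ω).const_mul γ).sub_const 1
  have h2 : HasDerivAt (fun ω : ℝ => Real.exp (2 * γ * ω)) (Real.exp (2 * γ * ω) * (2 * γ)) ω := by
    have h3 : HasDerivAt (fun ω : ℝ => 2 * γ * ω) (2 * γ) ω := by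
      simpa using (hasDerivAt_id ω).const_mul (2 * γ)
    simpa using h3.exp
  have h := ((h1.mul h2).const_mul (a + 1)).add_const 1
  have hfun : gC a γ = fun x => (a + 1) * ((γ * x - 1) * Real.exp (2 * γ * x)) + 1 := by
    funext x; simp only [gC]; ring
  rw [hfun]
  exact h.congr_deriv (by ring)

lemma gC_mono (a γ : ℝ) (hγ : 0 < γ) (ha : 0 < a) :
    StrictMonoOn (gC a γ) (Ici (1 / (2 * γ))) := by
  apply strictMonoOn_of_deriv_pos (convex_Ici _)
  · exact fun x _ => ((gC_hasDerivAt a γ x).differentiableAt.continuousAt).continuousWithinAt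
  · intro x hx
    rw [interior_Ici] at hx
    rw [(gC_hasDerivAt a γ x).deriv]
    have h1 : (0:ℝ) < 2 * γ * x - 1 := by
      rw [mem_Ioi, div_lt_iff₀ (by positivity)] at hx
      nlinarith
    have := Real.exp_pos (2 * γ * x)
    have ha1 : (0:ℝ) < a + 1 := by linarith
    positivity

lemma gC_anti (a γ : ℝ) (hγ : 0 < γ) (ha : 0 < a) :
    StrictAntiOn (gC a γ) (Icc 0 (1 / (2 * γ))) := by
  apply strictAntiOn_of_deriv_neg (convex_Icc _ _)
  · exact fun x _ => ((gC_hasDerivAt a γ x).differentiableAt.continuousAt).continuousWithinAt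
  · intro x hx
    rw [interior_Icc] at hx
    rw [(gC_hasDerivAt a γ x).deriv]
    have h1 : 2 * γ * x - 1 < 0 := by
      have := hx.2
      rw [lt_div_iff₀ (by positivity)] at this
      nlinarith
    have hpos : (0:ℝ) < (a + 1) * γ * Real.exp (2 * γ * x) := by positivity
    exact mul_neg_of_pos_of_neg hpos h1

lemma gC_root (a γ : ℝ) (ha : 0 < a) (hγ : 0 < γ) :
    ∃ ωs : ℝ, 1 / (2 * γ) < ωs ∧ gC a γ ωs = 0 ∧
      (∀ ω, 0 < ω → ω < ωs → gC a γ ω < 0) ∧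
      (∀ ω, ωs < ω → 0 < gC a γ ω) := by
  have he1 : (2:ℝ) < Real.exp 1 := by
    have := Real.add_one_lt_exp (by norm_num : (1:ℝ) ≠ 0)
    linarith
  have hl : (0:ℝ) < 1 / (2 * γ) := by positivity
  have hlu : 1 / (2 * γ) ≤ 2 / γ := by
    rw [div_le_div_iff₀ (by positivity) hγ]
    nlinarith
  have hgl : gC a γ (1 / (2 * γ)) < 0 := by
    have h1 : γ * (1 / (2 * γ)) = 1 / 2 := by field_simp
    have h2 : 2 * γ * (1 / (2 * γ)) = 1 := by field_simp
    simp only [gC, h1, h2]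
    nlinarith [mul_pos ha (by linarith : (0:ℝ) < Real.exp 1 - 2)]
  have hgu : 0 < gC a γ (2 / γ) := by
    have h1 : γ * (2 / γ) = 2 := by field_simp
    have h2 : 2 * γ * (2 / γ) = 4 := by field_simp; ring
    simp only [gC, h1, h2]
    have := Real.exp_pos (4:ℝ)
    nlinarith
  have hcont : ContinuousOn (gC a γ) (Icc (1 / (2 * γ)) (2 / γ)) :=
    fun x _ => ((gC_hasDerivAt a γ x).differentiableAt.continuousAt).continuousWithinAt
  obtain ⟨ωs, hωsmem, hroot⟩ := intermediate_value_Icc hlu hcont ⟨hgl.le, hgu.le⟩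
  have hmono := gC_mono a γ hγ ha
  have hanti := gC_anti a γ hγ ha
  have hg0 : gC a γ 0 = -a := by simp [gC]
  have hωsgt : 1 / (2 * γ) < ωs := by
    rcases eq_or_lt_of_le hωsmem.1 with h | h
    · exfalso; rw [← h] at hroot; linarith
    · exact h
  refine ⟨ωs, hωsgt, hroot, ?_, ?_⟩
  · intro ω hω hωlt
    rcases le_or_gt ω (1 / (2 * γ)) with h | h
    · have := hanti ⟨le_refl 0, hl.le⟩ ⟨hω.le, h⟩ hω
      rw [hg0] at this
      linarith
    · have := hmono (mem_Ici.mpr h.le) (mem_Ici.mpr hωsgt.le) hωlt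
      rw [hroot] at this
      exact this
  · intro ω hω
    have := hmono (mem_Ici.mpr hωsgt.le) (mem_Ici.mpr (hωsgt.trans hω).le) hω
    rw [hroot] at this
    exact this

lemma fC_hasDerivAt (a γ : ℝ) (ω : ℝ) (hω : ω ≠ 0) :
    HasDerivAt (fun ω => ((a + 1) * Real.exp (2 * γ * ω) - 1) / (2 * ω ^ 2))
      (gC a γ ω / ω ^ 3) ω := by
  have h2 : HasDerivAt (fun ω : ℝ => Real.exp (2 * γ * ω)) (Real.exp (2 * γ * ω) * (2 * γ)) ω := by
    have h3 : HasDerivAt (fun ω : ℝ => 2 * γ * ω) (2 * γ) ω := by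
      simpa using (hasDerivAt_id ω).const_mul (2 * γ)
    simpa using h3.exp
  have hN : HasDerivAt (fun ω : ℝ => (a + 1) * Real.exp (2 * γ * ω) - 1)
      ((a + 1) * (Real.exp (2 * γ * ω) * (2 * γ))) ω := (h2.const_mul (a + 1)).sub_const 1
  have hD : HasDerivAt (fun ω : ℝ => 2 * ω ^ 2) (2 * (2 * ω)) ω := by
    simpa using (hasDerivAt_pow 2 ω).const_mul 2
  have hD0 : 2 * ω ^ 2 ≠ 0 := by positivity
  have h := hN.div hD hD0
  refine h.congr_deriv ?_
  simp only [gC]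
  field_simp
  ring

/-- Optimization of the Cauchy-sensing-noise asymptotic variance
`f(ω) = ((a+1) e^{2γω} - 1) / (2ω²)`: there is a unique `ω* > 0` solving
`(a+1)(γω-1)e^{2γω} + 1 = 0`, it is the unique global minimizer of `f` on
`(0, ∞)`, `f` is strictly decreasing on `(0, ω*]`, and for any `θ_R > 0` the
minimizer of `f` over `(0, 2π/θ_R]` is `min (2π/θ_R) ω*`. -/
theorem cauchy_asv_optimal_omega
    (a γ : ℝ) (ha : 0 < a) (hγ : 0 < γ)
    (f : ℝ → ℝ)
    (hf : ∀ ω, f ω = ((a + 1) * Real.exp (2 * γ * ω) - 1) / (2 * ω ^ 2)) :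
    ∃ ωs : ℝ, 0 < ωs ∧
      ((a + 1) * (γ * ωs - 1) * Real.exp (2 * γ * ωs) + 1 = 0) ∧
      (∀ ω > (0 : ℝ), (a + 1) * (γ * ω - 1) * Real.exp (2 * γ * ω) + 1 = 0 → ω = ωs) ∧
      (∀ ω > (0 : ℝ), ω ≠ ωs → f ωs < f ω) ∧
      StrictAntiOn f (Set.Ioc 0 ωs) ∧
      ∀ θR : ℝ, 0 < θR →
        min (2 * Real.pi / θR) ωs ∈ Set.Ioc 0 (2 * Real.pi / θR) ∧
        ∀ ω ∈ Set.Ioc 0 (2 * Real.pi / θR),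
          f (min (2 * Real.pi / θR) ωs) ≤ f ω := by
  have hfF : f = fun ω => ((a + 1) * Real.exp (2 * γ * ω) - 1) / (2 * ω ^ 2) := funext hf
  subst hfF
  obtain ⟨ωs, hωsl, hroot, hneg, hpos⟩ := gC_root a γ ha hγ
  have hl : (0:ℝ) < 1 / (2 * γ) := by positivity
  have hωs0 : 0 < ωs := hl.trans hωsl
  -- f derivative facts
  have hfd : ∀ ω : ℝ, ω ≠ 0 → HasDerivAt
      (fun ω => ((a + 1) * Real.exp (2 * γ * ω) - 1) / (2 * ω ^ 2)) (gC a γ ω / ω ^ 3) ω :=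
    fun ω hω => fC_hasDerivAt a γ ω hω
  -- strict anti on Ioc 0 ωs
  have hanti : StrictAntiOn (fun ω => ((a + 1) * Real.exp (2 * γ * ω) - 1) / (2 * ω ^ 2))
      (Set.Ioc 0 ωs) := by
    apply strictAntiOn_of_deriv_neg (convex_Ioc _ _)
    · exact fun x hx =>
        ((hfd x hx.1.ne').differentiableAt.continuousAt).continuousWithinAt
    · intro x hx
      rw [interior_Ioc] at hx
      rw [(hfd x hx.1.ne').deriv]
      exact div_neg_of_neg_of_pos (hneg x hx.1 hx.2) (pow_pos hx.1 3)
  -- strict mono on Ici ωs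
  have hmono : StrictMonoOn (fun ω => ((a + 1) * Real.exp (2 * γ * ω) - 1) / (2 * ω ^ 2))
      (Set.Ici ωs) := by
    apply strictMonoOn_of_deriv_pos (convex_Ici _)
    · exact fun x hx =>
        ((hfd x (hωs0.trans_le hx).ne').differentiableAt.continuousAt).continuousWithinAt
    · intro x hx
      rw [interior_Ici] at hx
      have hx0 : 0 < x := hωs0.trans hx
      rw [(hfd x hx0.ne').deriv]
      exact div_pos (hpos x hx) (pow_pos hx0 3)
  have hglobal : ∀ ω > (0:ℝ), ω ≠ ωs →
      ((a + 1) * Real.exp (2 * γ * ωs) - 1) / (2 * ωs ^ 2) <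
      ((a + 1) * Real.exp (2 * γ * ω) - 1) / (2 * ω ^ 2) := by
    intro ω hω hne
    rcases lt_or_gt_of_ne hne with h | h
    · exact hanti ⟨hω, h.le⟩ ⟨hωs0, le_refl _⟩ h
    · exact hmono (mem_Ici.mpr (le_refl _)) (mem_Ici.mpr h.le) h
  refine ⟨ωs, hωs0, hroot, ?_, hglobal, hanti, ?_⟩
  · intro ω hω hgz
    have hgz' : gC a γ ω = 0 := hgz
    rcases lt_trichotomy ω ωs with h | h | h
    · exact absurd hgz' (hneg ω hω h).ne
    · exact h
    · exact absurd hgz'.symm (hpos ω h).ne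
  · intro θR hθR
    have hL : 0 < 2 * Real.pi / θR := by positivity
    constructor
    · exact ⟨lt_min hL hωs0, min_le_left _ _⟩
    · intro ω hω
      rcases le_total ωs (2 * Real.pi / θR) with h | h
      · rw [min_eq_right h]
        rcases eq_or_ne ω ωs with he | he
        · rw [he]
        · exact (hglobal ω hω.1 he).le
      · rw [min_eq_left h]
        rcases eq_or_lt_of_le hω.2 with he | he
        · rw [he]
        · exact (hanti ⟨hω.1, hω.2.trans h⟩ ⟨hL, h⟩ he).le
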